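/- The constant term (integral over the n-torus against Haar measure) of the q=0 nonsymmetric Koornwinder density Δ_K^{(n)}(z;t;a,b,c,d) equals ∏_{i=0}^{n−1} [(1−t^i ac)(1−t^i bc)(1−t^i cd)(1−t^i ad)(1−t^i bd)]^{−1} · ∏_{j=n−1}^{2n−2} (1−t^j abcd), for parameters a, b, c, d, t of absolute value less than 1. -/

import Mathlib

open Finset MeasureTheory

/-- Normalized integral over the `n`-torus `{|z_i| = 1}` against Haar measure
`∏_j dz_j/(2πi z_j)`, parametrized by `z_i = e^{iθ_i}`. -/
noncomputable def torusInt (n : ℕ) (f : (Fin n → ℂ) → ℂ) : ℂ :=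
  ((2 * Real.pi : ℂ))⁻¹ ^ n *
    ∫ θ : Fin n → ℝ in Set.univ.pi fun _ : Fin n => Set.Ioc (0 : ℝ) (2 * Real.pi),
      f fun i => Complex.exp (Complex.I * θ i)

/-- The `q = 0` nonsymmetric Koornwinder density `Δ_K^{(n)}(z;t;a,b,c,d)`. -/
noncomputable def nsDensity (n : ℕ) (t a b c d : ℂ) (z : Fin n → ℂ) : ℂ :=
  (∏ i : Fin n, (1 - z i ^ 2) /
      ((1 - a * z i) * (1 - b * z i) * (1 - c * z i) * (1 - d * z i) *
        (1 - c * (z i)⁻¹) * (1 - d * (z i)⁻¹))) *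
  ∏ i : Fin n, ∏ j : Fin n,
    if i < j then
      ((1 - z i * z j) * (1 - z i * (z j)⁻¹)) /
        ((1 - t * z i * z j) * (1 - t * z i * (z j)⁻¹))
    else 1

namespace NSK
open Complex Metric Set Real Filter Topology

lemma ne1 {w : ℂ} (h : ‖w‖ < 1) : (1 : ℂ) - w ≠ 0 := by
  intro h0
  have : w = 1 := by linear_combination -h0
  rw [this] at h; simp at h

lemma exp_unit (θ : ℝ) : ‖Complex.exp (Complex.I * θ)‖ = 1 := by
  rw [Complex.norm_exp]
  simp

lemma sub_ne_of_norm {z w : ℂ} (hz : ‖z‖ = 1) (hw : ‖w‖ < 1) : z - w ≠ 0 := by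
  intro h
  rw [sub_eq_zero] at h
  rw [← h, hz] at hw
  exact lt_irrefl _ hw

lemma norm_lt_of_le {u x : ℂ} (hu : ‖u‖ < 1) (hx : ‖x‖ ≤ 1) : ‖u * x‖ < 1 := by
  rw [norm_mul]
  exact lt_of_le_of_lt (mul_le_of_le_one_right (norm_nonneg u) hx) hu

lemma norm_unit3 {t z w : ℂ} (ht : ‖t‖ < 1) (hz : ‖z‖ ≤ 1) (hw : ‖w‖ = 1) :
    ‖t * z * w‖ < 1 := by
  rw [norm_mul, hw, mul_one]
  exact norm_lt_of_le ht hz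

lemma norm_unit3' {t z w : ℂ} (ht : ‖t‖ < 1) (hz : ‖z‖ ≤ 1) (hw : ‖w‖ = 1) :
    ‖t * z * w⁻¹‖ < 1 := by
  rw [norm_mul, norm_inv, hw]
  simpa using norm_lt_of_le ht hz

noncomputable def phiF (n : ℕ) (t a b c d : ℂ) (w : Fin n → ℂ) (z : ℂ) : ℂ :=
  (z * (1 - z ^ 2) * ∏ j : Fin n, ((1 - z * w j) * (1 - z * (w j)⁻¹))) /
    (((1 - a * z) * (1 - b * z) * (1 - c * z) * (1 - d * z)) *
      ∏ j : Fin n, ((1 - t * z * w j) * (1 - t * z * (w j)⁻¹)))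

noncomputable def ownF (a b c d z : ℂ) : ℂ :=
  (1 - z ^ 2) /
    ((1 - a * z) * (1 - b * z) * (1 - c * z) * (1 - d * z) * (1 - c * z⁻¹) * (1 - d * z⁻¹))

noncomputable def sigF (t x z : ℂ) : ℂ :=
  ((1 - x * z) * (1 - x * z⁻¹)) / ((1 - t * x * z) * (1 - t * x * z⁻¹))

lemma norm_unit_mul {x z : ℂ} (hz : ‖z‖ = 1) (hx : ‖x‖ < 1) : ‖x * z‖ < 1 := by
  rw [norm_mul, hz, mul_one]; exact hx

lemma norm_unit_mul_inv {x z : ℂ} (hz : ‖z‖ = 1) (hx : ‖x‖ < 1) : ‖x * z⁻¹‖ < 1 := by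
  rw [norm_mul, norm_inv, hz]; simpa using hx

lemma nsDensity_succ (n : ℕ) (t a b c d : ℂ) (z : Fin (n + 1) → ℂ) :
    nsDensity (n + 1) t a b c d z
      = (ownF a b c d (z 0) * ∏ j : Fin n, sigF t (z 0) (z j.succ)) *
        nsDensity n t a b c d (fun j => z j.succ) := by
  unfold nsDensity ownF sigF
  simp only [Fin.prod_univ_succ, Fin.succ_pos, Fin.not_lt_zero, if_true, if_false,
    Fin.succ_lt_succ_iff, lt_self_iff_false, one_mul, mul_one]
  ring

lemma sig_mul_own_c {t a b c d z : ℂ}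
    (hA : (1:ℂ) - a * z ≠ 0) (hB : (1:ℂ) - b * z ≠ 0) (hC : (1:ℂ) - c * z ≠ 0)
    (hD : (1:ℂ) - d * z ≠ 0) (hC' : (1:ℂ) - c * z⁻¹ ≠ 0) (hD' : (1:ℂ) - d * z⁻¹ ≠ 0)
    (hT : (1:ℂ) - t * c * z ≠ 0) (hT' : (1:ℂ) - t * c * z⁻¹ ≠ 0) :
    sigF t c z * ownF a b c d z = ownF a b (t * c) d z := by
  unfold sigF ownF
  rw [div_mul_div_comm,
    show (1 - c * z) * (1 - c * z⁻¹) * (1 - z ^ 2)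
        = ((1 - c * z) * (1 - c * z⁻¹)) * (1 - z ^ 2) by ring,
    show (1 - t * c * z) * (1 - t * c * z⁻¹) *
          ((1 - a * z) * (1 - b * z) * (1 - c * z) * (1 - d * z) *
            (1 - c * z⁻¹) * (1 - d * z⁻¹))
        = ((1 - c * z) * (1 - c * z⁻¹)) *
          ((1 - a * z) * (1 - b * z) * (1 - t * c * z) * (1 - d * z) *
            (1 - t * c * z⁻¹) * (1 - d * z⁻¹)) by ring,
    mul_div_mul_left _ _ (mul_ne_zero hC hC')]

lemma sig_mul_own_d {t a b c d z : ℂ}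
    (hA : (1:ℂ) - a * z ≠ 0) (hB : (1:ℂ) - b * z ≠ 0) (hC : (1:ℂ) - c * z ≠ 0)
    (hD : (1:ℂ) - d * z ≠ 0) (hC' : (1:ℂ) - c * z⁻¹ ≠ 0) (hD' : (1:ℂ) - d * z⁻¹ ≠ 0)
    (hT : (1:ℂ) - t * d * z ≠ 0) (hT' : (1:ℂ) - t * d * z⁻¹ ≠ 0) :
    sigF t d z * ownF a b c d z = ownF a b c (t * d) z := by
  unfold sigF ownF
  rw [div_mul_div_comm,
    show (1 - d * z) * (1 - d * z⁻¹) * (1 - z ^ 2)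
        = ((1 - d * z) * (1 - d * z⁻¹)) * (1 - z ^ 2) by ring,
    show (1 - t * d * z) * (1 - t * d * z⁻¹) *
          ((1 - a * z) * (1 - b * z) * (1 - c * z) * (1 - d * z) *
            (1 - c * z⁻¹) * (1 - d * z⁻¹))
        = ((1 - d * z) * (1 - d * z⁻¹)) *
          ((1 - a * z) * (1 - b * z) * (1 - c * z) * (1 - t * d * z) *
            (1 - c * z⁻¹) * (1 - t * d * z⁻¹)) by ring,
    mul_div_mul_left _ _ (mul_ne_zero hD hD')]

lemma prod_sig_mul_c {n : ℕ} {t a b c d : ℂ} (w : Fin n → ℂ) (hw : ∀ j, ‖w j‖ = 1)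
    (ha : ‖a‖ < 1) (hb : ‖b‖ < 1) (hc : ‖c‖ < 1) (hd : ‖d‖ < 1) (htc : ‖t * c‖ < 1) :
    (∏ j : Fin n, sigF t c (w j)) * nsDensity n t a b c d w
      = nsDensity n t a b (t * c) d w := by
  unfold nsDensity
  rw [← mul_assoc, ← Finset.prod_mul_distrib]
  congr 1
  refine Finset.prod_congr rfl fun i _ => ?_
  have h := sig_mul_own_c (t := t) (a := a) (b := b) (c := c) (d := d) (z := w i)
    (ne1 (norm_unit_mul (hw i) ha)) (ne1 (norm_unit_mul (hw i) hb))
    (ne1 (norm_unit_mul (hw i) hc)) (ne1 (norm_unit_mul (hw i) hd))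
    (ne1 (norm_unit_mul_inv (hw i) hc)) (ne1 (norm_unit_mul_inv (hw i) hd))
    (ne1 (norm_unit_mul (hw i) htc)) (ne1 (norm_unit_mul_inv (hw i) htc))
  unfold sigF ownF at h
  exact h

lemma prod_sig_mul_d {n : ℕ} {t a b c d : ℂ} (w : Fin n → ℂ) (hw : ∀ j, ‖w j‖ = 1)
    (ha : ‖a‖ < 1) (hb : ‖b‖ < 1) (hc : ‖c‖ < 1) (hd : ‖d‖ < 1) (htd : ‖t * d‖ < 1) :
    (∏ j : Fin n, sigF t d (w j)) * nsDensity n t a b c d w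
      = nsDensity n t a b c (t * d) w := by
  unfold nsDensity
  rw [← mul_assoc, ← Finset.prod_mul_distrib]
  congr 1
  refine Finset.prod_congr rfl fun i _ => ?_
  have h := sig_mul_own_d (t := t) (a := a) (b := b) (c := c) (d := d) (z := w i)
    (ne1 (norm_unit_mul (hw i) ha)) (ne1 (norm_unit_mul (hw i) hb))
    (ne1 (norm_unit_mul (hw i) hc)) (ne1 (norm_unit_mul (hw i) hd))
    (ne1 (norm_unit_mul_inv (hw i) hc)) (ne1 (norm_unit_mul_inv (hw i) hd))
    (ne1 (norm_unit_mul (hw i) htd)) (ne1 (norm_unit_mul_inv (hw i) htd))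
  unfold sigF ownF at h
  exact h


noncomputable def rhs (n : ℕ) (t a b c d : ℂ) : ℂ :=
  (∏ i ∈ Finset.range n,
      ((1 - t ^ i * a * c) * (1 - t ^ i * b * c) * (1 - t ^ i * c * d) *
       (1 - t ^ i * a * d) * (1 - t ^ i * b * d)))⁻¹ *
    ∏ j ∈ Finset.Ico (n - 1) (2 * n - 1), (1 - t ^ j * a * b * c * d)

lemma rhs_zero (t a b c d : ℂ) : rhs 0 t a b c d = 1 := by
  simp [rhs]

lemma norm3 {t x y : ℂ} (ht : ‖t‖ < 1) (hx : ‖x‖ < 1) (hy : ‖y‖ < 1) (i : ℕ) :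
    ‖t ^ i * x * y‖ < 1 := by
  rw [norm_mul, norm_mul, norm_pow]
  have h1 : ‖t‖ ^ i ≤ 1 := pow_le_one₀ (norm_nonneg t) ht.le
  have hxy : ‖x‖ * ‖y‖ < 1 :=
    lt_of_le_of_lt (mul_le_of_le_one_right (norm_nonneg x) hy.le) hx
  calc ‖t‖ ^ i * ‖x‖ * ‖y‖ = ‖t‖ ^ i * (‖x‖ * ‖y‖) := by ring
    _ ≤ ‖x‖ * ‖y‖ := mul_le_of_le_one_left (mul_nonneg (norm_nonneg x) (norm_nonneg y)) h1
    _ < 1 := hxy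

lemma norm5 {t a b c d : ℂ} (ht : ‖t‖ < 1) (ha : ‖a‖ < 1) (hb : ‖b‖ < 1) (hc : ‖c‖ < 1)
    (hd : ‖d‖ < 1) (i : ℕ) : ‖t ^ i * a * b * c * d‖ < 1 := by
  have h3 : ‖t ^ i * a * b‖ < 1 := norm3 ht ha hb i
  rw [norm_mul, norm_mul]
  have h4 : ‖t ^ i * a * b‖ * ‖c‖ < 1 :=
    lt_of_le_of_lt (mul_le_of_le_one_right (norm_nonneg _) hc.le) h3
  exact lt_of_le_of_lt (mul_le_of_le_one_right (mul_nonneg (norm_nonneg _) (norm_nonneg c)) hd.le)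
    h4

lemma prod_shift_last (t x y : ℂ) (n : ℕ) :
    ∏ i ∈ Finset.range (n + 1), (1 - t ^ i * x * y)
      = (1 - x * y) * ∏ i ∈ Finset.range n, (1 - t ^ i * x * (t * y)) := by
  rw [Finset.prod_range_succ']
  have h : ∀ i ∈ Finset.range n, (1 - t ^ (i + 1) * x * y) = (1 - t ^ i * x * (t * y)) :=
    fun i _ => by ring
  rw [Finset.prod_congr rfl h]
  simp [mul_comm]

lemma prod_shift_fst (t x y : ℂ) (n : ℕ) :
    ∏ i ∈ Finset.range (n + 1), (1 - t ^ i * x * y)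
      = (1 - x * y) * ∏ i ∈ Finset.range n, (1 - t ^ i * (t * x) * y) := by
  rw [Finset.prod_range_succ']
  have h : ∀ i ∈ Finset.range n, (1 - t ^ (i + 1) * x * y) = (1 - t ^ i * (t * x) * y) :=
    fun i _ => by ring
  rw [Finset.prod_congr rfl h]
  simp [mul_comm]

lemma K_succ_c (t a b c d : ℂ) (n : ℕ) :
    ∏ i ∈ Finset.range (n + 1),
        ((1 - t ^ i * a * c) * (1 - t ^ i * b * c) * (1 - t ^ i * c * d) *
         (1 - t ^ i * a * d) * (1 - t ^ i * b * d))
      = ((1 - a * c) * (1 - b * c) * (1 - c * d) * (1 - t ^ n * a * d) * (1 - t ^ n * b * d)) *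
        ∏ i ∈ Finset.range n,
          ((1 - t ^ i * a * (t * c)) * (1 - t ^ i * b * (t * c)) * (1 - t ^ i * (t * c) * d) *
           (1 - t ^ i * a * d) * (1 - t ^ i * b * d)) := by
  simp only [Finset.prod_mul_distrib]
  rw [prod_shift_last t a c, prod_shift_last t b c, prod_shift_fst t c d,
    Finset.prod_range_succ (fun i => 1 - t ^ i * a * d),
    Finset.prod_range_succ (fun i => 1 - t ^ i * b * d)]
  ring

lemma K_succ_d (t a b c d : ℂ) (n : ℕ) :
    ∏ i ∈ Finset.range (n + 1),
        ((1 - t ^ i * a * c) * (1 - t ^ i * b * c) * (1 - t ^ i * c * d) *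
         (1 - t ^ i * a * d) * (1 - t ^ i * b * d))
      = ((1 - t ^ n * a * c) * (1 - t ^ n * b * c) * (1 - c * d) * (1 - a * d) * (1 - b * d)) *
        ∏ i ∈ Finset.range n,
          ((1 - t ^ i * a * c) * (1 - t ^ i * b * c) * (1 - t ^ i * c * (t * d)) *
           (1 - t ^ i * a * (t * d)) * (1 - t ^ i * b * (t * d))) := by
  simp only [Finset.prod_mul_distrib]
  rw [prod_shift_last t c d, prod_shift_last t a d, prod_shift_last t b d,
    Finset.prod_range_succ (fun i => 1 - t ^ i * a * c),
    Finset.prod_range_succ (fun i => 1 - t ^ i * b * c)]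
  ring

lemma Ico_shift (n : ℕ) (f : ℕ → ℂ) :
    ∏ j ∈ Finset.Ico (n - 1) (2 * n - 1), f (j + 1) = ∏ j ∈ Finset.Ico n (2 * n), f j := by
  cases n with
  | zero => simp
  | succ m =>
    rw [show m + 1 - 1 = m by omega, show 2 * (m + 1) - 1 = 2 * m + 1 by omega,
      Finset.prod_Ico_eq_prod_range, Finset.prod_Ico_eq_prod_range,
      show 2 * m + 1 - m = m + 1 by omega, show 2 * (m + 1) - (m + 1) = m + 1 by omega]
    exact Finset.prod_congr rfl fun i _ => by rw [show m + i + 1 = m + 1 + i by omega]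

lemma core (T A B C D : ℂ) (h1 : 1 - A * C ≠ 0) (h2 : 1 - B * C ≠ 0) (h3 : 1 - C * D ≠ 0)
    (h4 : 1 - A * D ≠ 0) (h5 : 1 - B * D ≠ 0) (hcd : C - D ≠ 0) :
    C / ((1 - A * C) * (1 - B * C) * (1 - C * D) * (C - D)) *
        ((1 - A * C) * (1 - B * C) * (1 - C * D) * (1 - T * A * D) * (1 - T * B * D))
      + D / ((1 - A * D) * (1 - B * D) * (1 - C * D) * (D - C)) *
        ((1 - T * A * C) * (1 - T * B * C) * (1 - C * D) * (1 - A * D) * (1 - B * D))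
      = 1 - T ^ 2 * A * B * C * D := by
  have hdc : D - C ≠ 0 := by intro h; apply hcd; linear_combination -h
  rw [div_mul_eq_mul_div, div_mul_eq_mul_div,
    show C * ((1 - A * C) * (1 - B * C) * (1 - C * D) * (1 - T * A * D) * (1 - T * B * D))
        = ((1 - A * C) * (1 - B * C) * (1 - C * D)) * (C * ((1 - T * A * D) * (1 - T * B * D)))
      by ring,
    show (1 - A * C) * (1 - B * C) * (1 - C * D) * (C - D)
        = ((1 - A * C) * (1 - B * C) * (1 - C * D)) * (C - D) by ring,
    mul_div_mul_left _ _ (mul_ne_zero (mul_ne_zero h1 h2) h3),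
    show D * ((1 - T * A * C) * (1 - T * B * C) * (1 - C * D) * (1 - A * D) * (1 - B * D))
        = ((1 - A * D) * (1 - B * D) * (1 - C * D)) * (D * ((1 - T * A * C) * (1 - T * B * C)))
      by ring,
    show (1 - A * D) * (1 - B * D) * (1 - C * D) * (D - C)
        = ((1 - A * D) * (1 - B * D) * (1 - C * D)) * (D - C) by ring,
    mul_div_mul_left _ _ (mul_ne_zero (mul_ne_zero h4 h5) h3),
    div_add_div _ _ hcd hdc, div_eq_iff (mul_ne_zero hcd hdc)]
  ring

lemma rhs_rec (n : ℕ) {t a b c d : ℂ} (ha : ‖a‖ < 1) (hb : ‖b‖ < 1) (hc : ‖c‖ < 1)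
    (hd : ‖d‖ < 1) (ht : ‖t‖ < 1) (hcd : c ≠ d) :
    rhs (n + 1) t a b c d
      = c / ((1 - a * c) * (1 - b * c) * (1 - c * d) * (c - d)) * rhs n t a b (t * c) d
        + d / ((1 - a * d) * (1 - b * d) * (1 - c * d) * (d - c)) * rhs n t a b c (t * d) := by
  have hsub : c - d ≠ 0 := sub_ne_zero.mpr hcd
  have htc : ‖t * c‖ < 1 := by
    rw [norm_mul]; nlinarith [norm_nonneg t, norm_nonneg c]
  have htd : ‖t * d‖ < 1 := by
    rw [norm_mul]; nlinarith [norm_nonneg t, norm_nonneg d]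
  -- pieces
  have hP : (∏ i ∈ Finset.range n,
      ((1 - t ^ i * a * (t * c)) * (1 - t ^ i * b * (t * c)) * (1 - t ^ i * (t * c) * d) *
       (1 - t ^ i * a * d) * (1 - t ^ i * b * d))) ≠ 0 := by
    rw [Finset.prod_ne_zero_iff]
    intro i _
    exact mul_ne_zero (mul_ne_zero (mul_ne_zero (mul_ne_zero
      (ne1 (norm3 ht ha htc i)) (ne1 (norm3 ht hb htc i))) (ne1 (norm3 ht htc hd i)))
      (ne1 (norm3 ht ha hd i))) (ne1 (norm3 ht hb hd i))
  have hR : (∏ i ∈ Finset.range n,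
      ((1 - t ^ i * a * c) * (1 - t ^ i * b * c) * (1 - t ^ i * c * (t * d)) *
       (1 - t ^ i * a * (t * d)) * (1 - t ^ i * b * (t * d)))) ≠ 0 := by
    rw [Finset.prod_ne_zero_iff]
    intro i _
    exact mul_ne_zero (mul_ne_zero (mul_ne_zero (mul_ne_zero
      (ne1 (norm3 ht ha hc i)) (ne1 (norm3 ht hb hc i))) (ne1 (norm3 ht hc htd i)))
      (ne1 (norm3 ht ha htd i))) (ne1 (norm3 ht hb htd i))
  have hE1 : ((1 - a * c) * (1 - b * c) * (1 - c * d) * (1 - t ^ n * a * d) *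
      (1 - t ^ n * b * d)) ≠ 0 := by
    have h0 : ‖(1:ℂ)‖ < 1 → False := by simp
    exact mul_ne_zero (mul_ne_zero (mul_ne_zero (mul_ne_zero
      (ne1 (by simpa using norm3 ht ha hc 0)) (ne1 (by simpa using norm3 ht hb hc 0)))
      (ne1 (by simpa using norm3 ht hc hd 0))) (ne1 (norm3 ht ha hd n))) (ne1 (norm3 ht hb hd n))
  have hE2 : ((1 - t ^ n * a * c) * (1 - t ^ n * b * c) * (1 - c * d) * (1 - a * d) *
      (1 - b * d)) ≠ 0 := by
    exact mul_ne_zero (mul_ne_zero (mul_ne_zero (mul_ne_zero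
      (ne1 (norm3 ht ha hc n)) (ne1 (norm3 ht hb hc n)))
      (ne1 (by simpa using norm3 ht hc hd 0))) (ne1 (by simpa using norm3 ht ha hd 0)))
      (ne1 (by simpa using norm3 ht hb hd 0))
  -- core identity with T = t ^ n
  have hS := core (t ^ n) a b c d (ne1 (by simpa using norm3 ht ha hc 0))
    (ne1 (by simpa using norm3 ht hb hc 0)) (ne1 (by simpa using norm3 ht hc hd 0))
    (ne1 (by simpa using norm3 ht ha hd 0)) (ne1 (by simpa using norm3 ht hb hd 0)) hsub
  -- unfold rhs
  unfold rhs
  rw [show (n + 1) - 1 = n by omega, show 2 * (n + 1) - 1 = 2 * n + 1 by omega,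
    Finset.prod_Ico_succ_top (by omega : n ≤ 2 * n),
    K_succ_c t a b c d n]
  have hQc : (∏ j ∈ Finset.Ico (n - 1) (2 * n - 1), (1 - t ^ j * a * b * (t * c) * d))
      = ∏ j ∈ Finset.Ico n (2 * n), (1 - t ^ j * a * b * c * d) := by
    rw [← Ico_shift n (fun j => 1 - t ^ j * a * b * c * d)]
    exact Finset.prod_congr rfl fun j _ => by ring
  have hQd : (∏ j ∈ Finset.Ico (n - 1) (2 * n - 1), (1 - t ^ j * a * b * c * (t * d)))
      = ∏ j ∈ Finset.Ico n (2 * n), (1 - t ^ j * a * b * c * d) := by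
    rw [← Ico_shift n (fun j => 1 - t ^ j * a * b * c * d)]
    exact Finset.prod_congr rfl fun j _ => by ring
  rw [hQc, hQd]
  -- abstract algebra
  set E1 := (1 - a * c) * (1 - b * c) * (1 - c * d) * (1 - t ^ n * a * d) * (1 - t ^ n * b * d)
    with hE1def
  set E2 := (1 - t ^ n * a * c) * (1 - t ^ n * b * c) * (1 - c * d) * (1 - a * d) * (1 - b * d)
    with hE2def
  set P := ∏ i ∈ Finset.range n,
      ((1 - t ^ i * a * (t * c)) * (1 - t ^ i * b * (t * c)) * (1 - t ^ i * (t * c) * d) *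
       (1 - t ^ i * a * d) * (1 - t ^ i * b * d)) with hPdef
  set R := ∏ i ∈ Finset.range n,
      ((1 - t ^ i * a * c) * (1 - t ^ i * b * c) * (1 - t ^ i * c * (t * d)) *
       (1 - t ^ i * a * (t * d)) * (1 - t ^ i * b * (t * d))) with hRdef
  set q := ∏ j ∈ Finset.Ico n (2 * n), (1 - t ^ j * a * b * c * d) with hqdef
  set c1 := c / ((1 - a * c) * (1 - b * c) * (1 - c * d) * (c - d)) with hc1def
  set c2 := d / ((1 - a * d) * (1 - b * d) * (1 - c * d) * (d - c)) with hc2def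
  have hW : E1 * P = E2 * R := by
    rw [← K_succ_c t a b c d n, ← K_succ_d t a b c d n]
  have hSS : (1 - t ^ (2 * n) * a * b * c * d) = c1 * E1 + c2 * E2 := by
    rw [show (2 * n) = n * 2 by ring, pow_mul]
    exact hS.symm
  have e1 : E1 * (E1 * P)⁻¹ = P⁻¹ := by
    rw [mul_inv, ← mul_assoc, mul_inv_cancel₀ (by rw [hE1def]; exact hE1), one_mul]
  have e2 : E2 * (E1 * P)⁻¹ = R⁻¹ := by
    rw [hW, mul_inv, ← mul_assoc, mul_inv_cancel₀ (by rw [hE2def]; exact hE2), one_mul]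
  calc (E1 * P)⁻¹ * (q * (1 - t ^ (2 * n) * a * b * c * d))
      = c1 * (E1 * (E1 * P)⁻¹) * q + c2 * (E2 * (E1 * P)⁻¹) * q := by rw [hSS]; ring
    _ = c1 * (P⁻¹ * q) + c2 * (R⁻¹ * q) := by rw [e1, e2]; ring


lemma oneD {Φ : ℂ → ℂ} (hΦ : DiffContOnCl ℂ Φ (Metric.ball 0 1)) {c d : ℂ}
    (hc : ‖c‖ < 1) (hd : ‖d‖ < 1) (hcd : c ≠ d) :
    (∫ θ : ℝ in Set.Ioc 0 (2 * Real.pi),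
        Complex.exp (Complex.I * θ) * Φ (Complex.exp (Complex.I * θ)) /
          ((Complex.exp (Complex.I * θ) - c) * (Complex.exp (Complex.I * θ) - d)))
      = 2 * Real.pi * ((Φ c - Φ d) / (c - d)) := by
  have hsub : c - d ≠ 0 := sub_ne_zero.mpr hcd
  have hc' : c ∈ ball (0 : ℂ) 1 := by simpa [mem_ball_zero_iff] using hc
  have hd' : d ∈ ball (0 : ℂ) 1 := by simpa [mem_ball_zero_iff] using hd
  have h1 : (∮ z in C(0, 1), (z - c)⁻¹ • Φ z) = (2 * Real.pi * Complex.I : ℂ) • Φ c :=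
    hΦ.circleIntegral_sub_inv_smul hc'
  have h2 : (∮ z in C(0, 1), (z - d)⁻¹ • Φ z) = (2 * Real.pi * Complex.I : ℂ) • Φ d :=
    hΦ.circleIntegral_sub_inv_smul hd'
  have hΦc : ContinuousOn Φ (sphere (0 : ℂ) 1) := by
    refine hΦ.continuousOn.mono ?_
    rw [closure_ball (0 : ℂ) one_ne_zero]
    exact sphere_subset_closedBall
  have hnorm : ∀ z ∈ sphere (0 : ℂ) 1, ‖z‖ = 1 := fun z hz => by
    simpa [mem_sphere_iff_norm] using hz
  have hi : ∀ w : ℂ, ‖w‖ < 1 → CircleIntegrable (fun z => (z - w)⁻¹ • Φ z) 0 1 := by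
    intro w hw
    apply ContinuousOn.circleIntegrable (by norm_num)
    exact (((continuousOn_id.sub continuousOn_const).inv₀
      (fun z hz => sub_ne_of_norm (hnorm z hz) hw)).smul hΦc)
  have h3 : (∮ z in C(0, 1),
        ((fun z => (z - c)⁻¹ • Φ z) z - (fun z => (z - d)⁻¹ • Φ z) z))
      = (2 * Real.pi * Complex.I : ℂ) • Φ c - (2 * Real.pi * Complex.I : ℂ) • Φ d := by
    rw [circleIntegral.integral_sub (hi c hc) (hi d hd), h1, h2]
  have h4 : (∮ z in C(0, 1),
        ((fun z => (z - c)⁻¹ • Φ z) z - (fun z => (z - d)⁻¹ • Φ z) z))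
      = ∫ θ in (0:ℝ)..(2 * Real.pi),
          (Complex.I * (c - d)) •
            (Complex.exp (Complex.I * θ) * Φ (Complex.exp (Complex.I * θ)) /
              ((Complex.exp (Complex.I * θ) - c) * (Complex.exp (Complex.I * θ) - d))) := by
    rw [circleIntegral]
    apply intervalIntegral.integral_congr
    intro θ _
    have hzmap : circleMap 0 1 θ = Complex.exp (Complex.I * θ) := by
      simp [circleMap, mul_comm]
    simp only [deriv_circleMap]
    rw [hzmap]
    set z := Complex.exp (Complex.I * θ) with hz
    have hz1 : ‖z‖ = 1 := exp_unit θ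
    have hzc : z - c ≠ 0 := sub_ne_of_norm hz1 hc
    have hzd : z - d ≠ 0 := sub_ne_of_norm hz1 hd
    show (z * Complex.I) • ((z - c)⁻¹ • Φ z - (z - d)⁻¹ • Φ z)
        = (Complex.I * (c - d)) • (z * Φ z / ((z - c) * (z - d)))
    simp only [smul_eq_mul]
    field_simp
    ring
  have h5 := h3.symm.trans h4
  rw [intervalIntegral.integral_smul] at h5
  rw [intervalIntegral.integral_of_le Real.two_pi_pos.le] at h5
  have hI : (Complex.I * (c - d)) ≠ 0 := mul_ne_zero Complex.I_ne_zero hsub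
  apply mul_left_cancel₀ hI
  rw [← smul_eq_mul, h5.symm]
  simp only [smul_eq_mul]
  field_simp

variable {n : ℕ} {t a b c d : ℂ} {w : Fin n → ℂ}

lemma prodDen_ne (ht : ‖t‖ < 1) (hw : ∀ j, ‖w j‖ = 1) {z : ℂ} (hz : ‖z‖ ≤ 1) :
    (∏ j : Fin n, ((1 - t * z * w j) * (1 - t * z * (w j)⁻¹))) ≠ 0 := by
  rw [Finset.prod_ne_zero_iff]
  intro j _
  exact mul_ne_zero (ne1 (norm_unit3 ht hz (hw j))) (ne1 (norm_unit3' ht hz (hw j)))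

lemma phiF_diff (ha : ‖a‖ < 1) (hb : ‖b‖ < 1) (hc : ‖c‖ < 1) (hd : ‖d‖ < 1) (ht : ‖t‖ < 1)
    (hw : ∀ j, ‖w j‖ = 1) : DiffContOnCl ℂ (phiF n t a b c d w) (ball 0 1) := by
  apply DifferentiableOn.diffContOnCl
  rw [closure_ball (0:ℂ) one_ne_zero]
  have hNum : Differentiable ℂ fun z : ℂ =>
      z * (1 - z ^ 2) * ∏ j : Fin n, ((1 - z * w j) * (1 - z * (w j)⁻¹)) := by
    apply Differentiable.mul
    · exact differentiable_id.mul ((differentiable_const 1).sub (differentiable_id.pow 2))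
    · apply Differentiable.fun_finsetProd
      intro j _
      exact ((differentiable_const 1).sub (differentiable_id.mul_const _)).mul
        ((differentiable_const 1).sub (differentiable_id.mul_const _))
  have hDen : Differentiable ℂ fun z : ℂ =>
      ((1 - a * z) * (1 - b * z) * (1 - c * z) * (1 - d * z)) *
        ∏ j : Fin n, ((1 - t * z * w j) * (1 - t * z * (w j)⁻¹)) := by
    apply Differentiable.mul
    · exact ((((differentiable_const 1).sub (differentiable_fun_id.const_mul a)).mul
        ((differentiable_const 1).sub (differentiable_fun_id.const_mul b))).mul
        ((differentiable_const 1).sub (differentiable_fun_id.const_mul c))).mul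
        ((differentiable_const 1).sub (differentiable_fun_id.const_mul d))
    · apply Differentiable.fun_finsetProd
      intro j _
      exact ((differentiable_const 1).sub ((differentiable_fun_id.const_mul t).mul_const _)).mul
        ((differentiable_const 1).sub ((differentiable_fun_id.const_mul t).mul_const _))
  exact hNum.differentiableOn.div hDen.differentiableOn fun z hz => by
    have hz1 : ‖z‖ ≤ 1 := by simpa [mem_closedBall_iff_norm] using hz
    exact mul_ne_zero
      (mul_ne_zero (mul_ne_zero (mul_ne_zero
        (ne1 (norm_lt_of_le ha hz1)) (ne1 (norm_lt_of_le hb hz1)))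
        (ne1 (norm_lt_of_le hc hz1))) (ne1 (norm_lt_of_le hd hz1)))
      (prodDen_ne ht hw hz1)

lemma phiF_eval_c (ha : ‖a‖ < 1) (hb : ‖b‖ < 1) (hc : ‖c‖ < 1) (hd : ‖d‖ < 1) (ht : ‖t‖ < 1)
    (hw : ∀ j, ‖w j‖ = 1) :
    phiF n t a b c d w c
      = c / ((1 - a * c) * (1 - b * c) * (1 - c * d)) * ∏ j : Fin n, sigF t c (w j) := by
  unfold phiF sigF
  rw [Finset.prod_div_distrib, div_mul_div_comm, div_eq_div_iff
    (mul_ne_zero (mul_ne_zero (mul_ne_zero (mul_ne_zero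
      (ne1 (norm_lt_of_le ha hc.le)) (ne1 (norm_lt_of_le hb hc.le)))
      (ne1 (norm_lt_of_le hc hc.le))) (ne1 (norm_lt_of_le hd hc.le)))
      (prodDen_ne ht hw hc.le))
    (mul_ne_zero (mul_ne_zero (mul_ne_zero
      (ne1 (norm_lt_of_le ha hc.le)) (ne1 (norm_lt_of_le hb hc.le)))
      (ne1 (norm_lt_of_le hc hd.le))) (prodDen_ne ht hw hc.le))]
  ring

lemma phiF_eval_d (ha : ‖a‖ < 1) (hb : ‖b‖ < 1) (hc : ‖c‖ < 1) (hd : ‖d‖ < 1) (ht : ‖t‖ < 1)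
    (hw : ∀ j, ‖w j‖ = 1) :
    phiF n t a b c d w d
      = d / ((1 - a * d) * (1 - b * d) * (1 - c * d)) * ∏ j : Fin n, sigF t d (w j) := by
  unfold phiF sigF
  rw [Finset.prod_div_distrib, div_mul_div_comm, div_eq_div_iff
    (mul_ne_zero (mul_ne_zero (mul_ne_zero (mul_ne_zero
      (ne1 (norm_lt_of_le ha hd.le)) (ne1 (norm_lt_of_le hb hd.le)))
      (ne1 (norm_lt_of_le hc hd.le))) (ne1 (norm_lt_of_le hd hd.le)))
      (prodDen_ne ht hw hd.le))
    (mul_ne_zero (mul_ne_zero (mul_ne_zero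
      (ne1 (norm_lt_of_le ha hd.le)) (ne1 (norm_lt_of_le hb hd.le)))
      (ne1 (norm_lt_of_le hc hd.le))) (prodDen_ne ht hw hd.le))]
  ring

/-- The inner 1D integral of the peeled density. -/
lemma inner_int (ha : ‖a‖ < 1) (hb : ‖b‖ < 1) (hc : ‖c‖ < 1)
    (hd : ‖d‖ < 1) (ht : ‖t‖ < 1) (hcd : c ≠ d) (hw : ∀ j, ‖w j‖ = 1) :
    (∫ x : ℝ in Set.Ioc 0 (2 * Real.pi),
        ownF a b c d (Complex.exp (Complex.I * x)) *
          ∏ j : Fin n, sigF t (Complex.exp (Complex.I * x)) (w j))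
      = 2 * Real.pi *
          (c / ((1 - a * c) * (1 - b * c) * (1 - c * d) * (c - d)) * ∏ j : Fin n, sigF t c (w j)
           + d / ((1 - a * d) * (1 - b * d) * (1 - c * d) * (d - c)) *
             ∏ j : Fin n, sigF t d (w j)) := by
  have hsub : c - d ≠ 0 := sub_ne_zero.mpr hcd
  have hdc : d - c ≠ 0 := fun h => hsub (by linear_combination -h)
  have hpt : ∀ x : ℝ,
      ownF a b c d (Complex.exp (Complex.I * x)) *
          ∏ j : Fin n, sigF t (Complex.exp (Complex.I * x)) (w j)
        = Complex.exp (Complex.I * x) * phiF n t a b c d w (Complex.exp (Complex.I * x)) /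
            ((Complex.exp (Complex.I * x) - c) * (Complex.exp (Complex.I * x) - d)) := by
    intro x
    set z := Complex.exp (Complex.I * x) with hzdef
    have hz1 : ‖z‖ = 1 := exp_unit x
    have hz0 : z ≠ 0 := by intro h; rw [h] at hz1; simp at hz1
    have hzc : z - c ≠ 0 := sub_ne_of_norm hz1 hc
    have hzd : z - d ≠ 0 := sub_ne_of_norm hz1 hd
    have hA := ne1 (norm_lt_of_le ha hz1.le)
    have hB := ne1 (norm_lt_of_le hb hz1.le)
    have hC := ne1 (norm_lt_of_le hc hz1.le)
    have hD := ne1 (norm_lt_of_le hd hz1.le)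
    have hC' : (1:ℂ) - c * z⁻¹ ≠ 0 := by
      apply ne1; rw [norm_mul, norm_inv, hz1]; simpa using hc
    have hD' : (1:ℂ) - d * z⁻¹ ≠ 0 := by
      apply ne1; rw [norm_mul, norm_inv, hz1]; simpa using hd
    have hPd := prodDen_ne (n := n) (w := w) ht hw hz1.le
    unfold ownF sigF phiF
    rw [Finset.prod_div_distrib, div_mul_div_comm, mul_div_assoc', div_div, div_eq_div_iff
      (mul_ne_zero (mul_ne_zero (mul_ne_zero (mul_ne_zero (mul_ne_zero
        (mul_ne_zero hA hB) hC) hD) hC') hD') hPd)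
      (mul_ne_zero (mul_ne_zero (mul_ne_zero (mul_ne_zero (mul_ne_zero hA hB) hC) hD) hPd)
        (mul_ne_zero hzc hzd))]
    field_simp
  rw [setIntegral_congr_fun measurableSet_Ioc (fun x _ => hpt x),
    oneD (phiF_diff ha hb hc hd ht hw) hc hd hcd,
    phiF_eval_c ha hb hc hd ht hw, phiF_eval_d ha hb hc hd ht hw]
  congr 1
  have hX : ((1 - a * c) * (1 - b * c) * (1 - c * d)) ≠ 0 :=
    mul_ne_zero (mul_ne_zero (ne1 (norm_lt_of_le ha hc.le)) (ne1 (norm_lt_of_le hb hc.le)))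
      (ne1 (norm_lt_of_le hc hd.le))
  have hY : ((1 - a * d) * (1 - b * d) * (1 - c * d)) ≠ 0 :=
    mul_ne_zero (mul_ne_zero (ne1 (norm_lt_of_le ha hd.le)) (ne1 (norm_lt_of_le hb hd.le)))
      (ne1 (norm_lt_of_le hc hd.le))
  set Sc := ∏ j : Fin n, sigF t c (w j)
  set Sd := ∏ j : Fin n, sigF t d (w j)
  field_simp
  ring

/-- The box of integration. -/
def box (m : ℕ) : Set (Fin m → ℝ) := Set.univ.pi fun _ : Fin m => Set.Ioc (0 : ℝ) (2 * Real.pi)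

lemma box_measurable (m : ℕ) : MeasurableSet (box m) :=
  MeasurableSet.univ_pi fun _ => measurableSet_Ioc

lemma box_subset_Icc (m : ℕ) :
    box m ⊆ Set.univ.pi fun _ : Fin m => Set.Icc (0 : ℝ) (2 * Real.pi) :=
  Set.pi_mono fun _ _ => Set.Ioc_subset_Icc_self

lemma box_volume_lt_top (m : ℕ) : volume (box m) < ⊤ := by
  rw [box, volume_pi_pi]
  refine ENNReal.prod_lt_top fun i _ => ?_
  rw [Real.volume_Ioc]
  exact ENNReal.ofReal_lt_top

lemma integrableOn_box {m : ℕ} {f : (Fin m → ℝ) → ℂ} (hf : Continuous f) :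
    IntegrableOn f (box m) := by
  have h1 : IsCompact (Set.univ.pi fun _ : Fin m => Set.Icc (0 : ℝ) (2 * Real.pi)) :=
    isCompact_univ_pi fun _ => isCompact_Icc
  exact (hf.continuousOn.integrableOn_compact h1).mono_set (box_subset_Icc m)

lemma cons_exp (x : ℝ) (y : Fin m → ℝ) :
    True := trivial

/-- Peeling the first coordinate of the torus integral. -/
lemma torusInt_succ {m : ℕ} (f : (Fin (m + 1) → ℂ) → ℂ)
    (hcont : Continuous fun θ : Fin (m + 1) → ℝ => f fun i => Complex.exp (Complex.I * θ i)) :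
    torusInt (m + 1) f
      = ((2 * Real.pi : ℂ))⁻¹ ^ (m + 1) *
          ∫ y : Fin m → ℝ in box m,
            ∫ x : ℝ in Set.Ioc (0 : ℝ) (2 * Real.pi),
              f (Fin.cons (Complex.exp (Complex.I * x))
                  fun j => Complex.exp (Complex.I * y j)) := by
  unfold torusInt
  congr 1
  set F : (Fin (m + 1) → ℝ) → ℂ := fun θ => f fun i => Complex.exp (Complex.I * θ i) with hF
  set e : (Fin (m + 1) → ℝ) ≃ᵐ ℝ × (Fin m → ℝ) :=
    MeasurableEquiv.piFinSuccAbove (fun _ : Fin (m + 1) => ℝ) 0 with he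
  have hem : MeasurePreserving e.symm :=
    (volume_preserving_piFinSuccAbove (fun _ : Fin (m + 1) => ℝ) 0).symm _
  have hcons : ∀ (x : ℝ) (y : Fin m → ℝ),
      F (e.symm (x, y)) = f (Fin.cons (Complex.exp (Complex.I * x))
        fun j => Complex.exp (Complex.I * y j)) := by
    intro x y
    simp only [hF]
    refine congrArg f ?_
    funext i
    induction i using Fin.cases with
    | zero =>
      simp only [he, MeasurableEquiv.piFinSuccAbove_symm_apply, Fin.insertNthEquiv,
        Equiv.coe_fn_mk, Fin.insertNth_apply_same, Fin.cons_zero]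
    | succ j =>
      have h0 : (0 : Fin (m + 1)).succAbove j = j.succ := by simp
      simp only [he, MeasurableEquiv.piFinSuccAbove_symm_apply, Fin.insertNthEquiv,
        Equiv.coe_fn_mk]
      rw [Fin.cons_succ, ← h0, Fin.insertNth_apply_succAbove]
  have hpre : e.symm ⁻¹' (Set.univ.pi fun _ : Fin (m + 1) => Set.Ioc (0 : ℝ) (2 * Real.pi))
      = Set.Ioc (0 : ℝ) (2 * Real.pi) ×ˢ box m := by
    ext p
    simp only [Set.mem_preimage, Set.mem_pi, Set.mem_univ, forall_true_left, Set.mem_prod,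
      box, he, MeasurableEquiv.piFinSuccAbove_symm_apply]
    rw [Fin.forall_iff_succAbove (0 : Fin (m + 1))]
    simp [Fin.insertNth_apply_same, Fin.insertNth_apply_succAbove]
  have hint : Integrable (fun p : ℝ × (Fin m → ℝ) => F (e.symm p))
      ((volume.restrict (Set.Ioc (0 : ℝ) (2 * Real.pi))).prod (volume.restrict (box m))) := by
    rw [Measure.prod_restrict]
    have hco : Continuous fun p : ℝ × (Fin m → ℝ) => F (e.symm p) := by
      have hc2 : Continuous fun p : ℝ × (Fin m → ℝ) =>
          (Fin.cons (Complex.exp (Complex.I * p.1))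
            fun j => Complex.exp (Complex.I * p.2 j) : Fin (m + 1) → ℂ) := by
        refine continuous_pi fun i => ?_
        induction i using Fin.cases with
        | zero =>
          simpa using (by fun_prop :
            Continuous fun p : ℝ × (Fin m → ℝ) => Complex.exp (Complex.I * p.1))
        | succ j =>
          simpa using (by fun_prop :
            Continuous fun p : ℝ × (Fin m → ℝ) => Complex.exp (Complex.I * p.2 j))
      have : (fun p : ℝ × (Fin m → ℝ) => F (e.symm p))
          = fun p => f (Fin.cons (Complex.exp (Complex.I * p.1))
              fun j => Complex.exp (Complex.I * p.2 j)) := by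
        funext p; exact hcons p.1 p.2
      rw [this]
      -- f ∘ (cons …) : continuity from hcont composed with real cons
      have hrcons : Continuous fun p : ℝ × (Fin m → ℝ) => (Fin.cons p.1 p.2 : Fin (m + 1) → ℝ) :=
        continuous_pi fun i => Fin.cases continuous_fst
          (fun j => (continuous_apply j).comp continuous_snd) i
      have hcomp := hcont.comp hrcons
      have h3 : (fun p : ℝ × (Fin m → ℝ) => f (Fin.cons (Complex.exp (Complex.I * p.1))
          fun j => Complex.exp (Complex.I * p.2 j)))
          = F ∘ (fun p : ℝ × (Fin m → ℝ) => (Fin.cons p.1 p.2 : Fin (m + 1) → ℝ)) := by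
        funext p
        show _ = F (Fin.cons p.1 p.2)
        simp only [hF]
        refine (congrArg f ?_).symm
        funext i
        induction i using Fin.cases with
        | zero => simp
        | succ j => simp
      rw [h3]
      exact hcomp
    have hKc : IsCompact ((Set.Icc (0:ℝ) (2 * Real.pi)) ×ˢ
        (Set.univ.pi fun _ : Fin m => Set.Icc (0 : ℝ) (2 * Real.pi))) :=
      isCompact_Icc.prod (isCompact_univ_pi fun _ => isCompact_Icc)
    exact (hco.continuousOn.integrableOn_compact hKc).mono_set
      (Set.prod_mono Set.Ioc_subset_Icc_self (box_subset_Icc m))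
  calc ∫ θ : Fin (m + 1) → ℝ in Set.univ.pi fun _ => Set.Ioc (0 : ℝ) (2 * Real.pi), F θ
      = ∫ p in e.symm ⁻¹' (Set.univ.pi fun _ => Set.Ioc (0 : ℝ) (2 * Real.pi)),
          F (e.symm p) :=
        (hem.setIntegral_preimage_emb e.symm.measurableEmbedding F _).symm
    _ = ∫ p in Set.Ioc (0 : ℝ) (2 * Real.pi) ×ˢ box m, F (e.symm p) := by
        rw [hpre]
    _ = ∫ p in Set.Ioc (0 : ℝ) (2 * Real.pi) ×ˢ box m,
          F (e.symm p) ∂(volume.prod volume) := by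
        rw [← Measure.volume_eq_prod]
    _ = ∫ y in box m, ∫ x in Set.Ioc (0 : ℝ) (2 * Real.pi), F (e.symm (x, y)) := by
        rw [← Measure.prod_restrict]
        exact MeasureTheory.integral_prod_symm _ hint
    _ = _ := by
        refine setIntegral_congr_fun (box_measurable m) fun y _ => ?_
        refine setIntegral_congr_fun measurableSet_Ioc fun x _ => ?_
        exact hcons x y

lemma torusInt_zero (f : (Fin 0 → ℂ) → ℂ) (hf : ∀ z, f z = 1) : torusInt 0 f = 1 := by
  unfold torusInt
  have h1 : (Set.univ.pi fun _ : Fin 0 => Set.Ioc (0 : ℝ) (2 * Real.pi)) = Set.univ := by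
    ext x; simp
  rw [h1]
  rw [Measure.restrict_univ]
  have : ∀ θ : Fin 0 → ℝ, f (fun i => Complex.exp (Complex.I * θ i)) = 1 := fun θ => hf _
  simp only [this]
  rw [integral_const]
  have : (volume : Measure (Fin 0 → ℝ)) Set.univ = 1 := by
    rw [MeasureTheory.volume_pi, Measure.pi_univ]
    simp
  rw [measureReal_def, this]
  simp

/-- Continuity in a complex parameter of a parametrized box integral. -/
lemma cont_param {m : ℕ} {F : ℂ → (Fin m → ℝ) → ℂ}
    (hF : ContinuousOn (fun q : ℂ × (Fin m → ℝ) => F q.1 q.2) (ball 0 1 ×ˢ Set.univ)) :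
    ContinuousOn (fun p => ∫ θ in box m, F p θ) (ball (0:ℂ) 1) := by
  intro p₀ hp₀
  have hp₀n : ‖p₀‖ < 1 := by simpa [mem_ball_zero_iff] using hp₀
  set ε : ℝ := (1 - ‖p₀‖) / 2 with hε
  have hεpos : 0 < ε := by rw [hε]; linarith
  have hsub : closedBall p₀ ε ⊆ ball (0:ℂ) 1 := by
    intro z hz
    rw [mem_ball_zero_iff]
    have h1 : ‖z - p₀‖ ≤ ε := by rw [mem_closedBall, dist_eq_norm] at hz; exact hz
    have h2 : ‖z‖ - ‖p₀‖ ≤ ‖z - p₀‖ := norm_sub_norm_le z p₀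
    rw [hε] at h1; linarith
  have hK : IsCompact ((closedBall p₀ ε) ×ˢ
      (Set.univ.pi fun _ : Fin m => Set.Icc (0 : ℝ) (2 * Real.pi))) :=
    (isCompact_closedBall _ _).prod (isCompact_univ_pi fun _ => isCompact_Icc)
  have hFK : ContinuousOn (fun q : ℂ × (Fin m → ℝ) => F q.1 q.2)
      ((closedBall p₀ ε) ×ˢ (Set.univ.pi fun _ : Fin m => Set.Icc (0 : ℝ) (2 * Real.pi))) :=
    hF.mono fun q hq => ⟨hsub hq.1, trivial⟩
  obtain ⟨C, hC⟩ := hK.exists_bound_of_continuousOn hFK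
  refine continuousWithinAt_of_dominated (bound := fun _ => C) ?_ ?_ ?_ ?_
  · filter_upwards [eventually_mem_nhdsWithin] with p hp
    have hFp : Continuous (F p) := by
      rw [← continuousOn_univ]
      have hmap : Set.MapsTo (fun θ : Fin m → ℝ => ((p, θ) : ℂ × (Fin m → ℝ)))
          Set.univ (ball (0:ℂ) 1 ×ˢ (Set.univ : Set (Fin m → ℝ))) := fun θ _ => ⟨hp, trivial⟩
      exact hF.comp (Continuous.continuousOn (by fun_prop)) hmap
    exact hFp.aestronglyMeasurable
  · have hcb : ∀ᶠ p in 𝓝[ball (0:ℂ) 1] p₀, p ∈ closedBall p₀ ε :=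
      eventually_nhdsWithin_of_eventually_nhds
        (eventually_of_mem (closedBall_mem_nhds p₀ hεpos) fun z hz => hz)
    filter_upwards [hcb] with p hp
    filter_upwards [ae_restrict_mem (box_measurable m)] with θ hθ
    exact hC (p, θ) ⟨hp, box_subset_Icc m hθ⟩
  · rw [integrable_const_iff]
    right
    refine ⟨?_⟩
    rw [Measure.restrict_apply_univ]
    exact box_volume_lt_top m
  · filter_upwards [ae_restrict_mem (box_measurable m)] with θ _
    have : ContinuousWithinAt (fun q : ℂ × (Fin m → ℝ) => F q.1 q.2)
        (ball (0:ℂ) 1 ×ˢ Set.univ) (p₀, θ) := hF (p₀, θ) ⟨hp₀, trivial⟩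
    have hmap : Set.MapsTo (fun p : ℂ => ((p, θ) : ℂ × (Fin m → ℝ))) (ball (0:ℂ) 1)
        (ball (0:ℂ) 1 ×ˢ (Set.univ : Set (Fin m → ℝ))) := fun p hp => ⟨hp, trivial⟩
    have hcw : ContinuousWithinAt (fun p : ℂ => ((p, θ) : ℂ × (Fin m → ℝ)))
        (ball (0:ℂ) 1) p₀ := Continuous.continuousWithinAt (by fun_prop)
    exact ContinuousWithinAt.comp (g := fun q : ℂ × (Fin m → ℝ) => F q.1 q.2)
      (f := fun p : ℂ => ((p, θ) : ℂ × (Fin m → ℝ))) (x := p₀) this hcw hmap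

/-- Equality on a ball minus a countable set extends to the ball, for continuous functions. -/
lemma eq_of_dense {f g : ℂ → ℂ} (hf : ContinuousOn f (ball (0:ℂ) 1))
    (hg : ContinuousOn g (ball (0:ℂ) 1)) {B : Set ℂ} (hB : B.Countable)
    (h : ∀ y ∈ ball (0:ℂ) 1, y ∉ B → f y = g y) {x : ℂ} (hx : x ∈ ball (0:ℂ) 1) :
    f x = g x := by
  have hxn : ‖x‖ < 1 := by simpa [mem_ball_zero_iff] using hx
  set r : ℝ := (1 + ‖x‖) / 2 with hr
  have hr1 : ‖x‖ < r := by rw [hr]; linarith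
  have hr2 : r < 1 := by rw [hr]; linarith
  have hDense : Dense Bᶜ := hB.dense_compl ℂ
  set s : Set ℂ := ball (0:ℂ) r ∩ Bᶜ with hs
  have hsball : s ⊆ ball (0:ℂ) 1 := fun y hy =>
    ball_subset_ball hr2.le hy.1
  have hxc : x ∈ closure s := by
    rw [_root_.mem_closure_iff]
    intro o ho hxo
    have hoi : IsOpen (o ∩ ball (0:ℂ) r) := ho.inter isOpen_ball
    have hne : (o ∩ ball (0:ℂ) r).Nonempty := ⟨x, hxo, by simpa [mem_ball_zero_iff] using hr1⟩
    obtain ⟨y, hyB, hy⟩ := hDense.exists_mem_open hoi hne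
    exact ⟨y, hy.1, hy.2, hyB⟩
  have hfc : ContinuousWithinAt f s x := ((hf x hx).mono hsball)
  have hgc : ContinuousWithinAt g s x := ((hg x hx).mono hsball)
  have hne : (𝓝[s] x).NeBot := mem_closure_iff_nhdsWithin_neBot.mp hxc
  have heq : f =ᶠ[𝓝[s] x] g := by
    filter_upwards [eventually_mem_nhdsWithin] with y hy
    exact h y (hsball hy) hy.2
  have h2 : Filter.Tendsto f (𝓝[s] x) (𝓝 (g x)) := hgc.congr' heq.symm
  exact tendsto_nhds_unique hfc h2


lemma contDensity_theta {m : ℕ} {t a b c d : ℂ} (ht : ‖t‖ < 1) (ha : ‖a‖ < 1) (hb : ‖b‖ < 1)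
    (hc : ‖c‖ < 1) (hd : ‖d‖ < 1) :
    Continuous fun θ : Fin m → ℝ =>
      nsDensity m t a b c d (fun i => Complex.exp (Complex.I * θ i)) := by
  have hz : ∀ i : Fin m, Continuous
      (fun θ : Fin m → ℝ => Complex.exp (Complex.I * θ i)) := by
    intro i; fun_prop
  have hzu : ∀ (i : Fin m) (θ : Fin m → ℝ),
      ‖Complex.exp (Complex.I * θ i)‖ = 1 := fun i θ => exp_unit _
  have hzinv : ∀ i : Fin m, Continuous
      (fun θ : Fin m → ℝ => (Complex.exp (Complex.I * θ i))⁻¹) :=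
    fun i => (hz i).inv₀ fun θ => Complex.exp_ne_zero _
  have hzinvu : ∀ (i : Fin m) (θ : Fin m → ℝ),
      ‖(Complex.exp (Complex.I * θ i))⁻¹‖ = 1 := fun i θ => by
    rw [norm_inv, hzu i θ]; norm_num
  unfold nsDensity
  apply Continuous.mul
  · apply continuous_finset_prod
    intro i _
    apply Continuous.div
    · exact continuous_const.sub ((hz i).pow 2)
    · exact (((((continuous_const.sub ((continuous_const (y := a)).mul (hz i))).mul
        (continuous_const.sub ((continuous_const (y := b)).mul (hz i)))).mul
        (continuous_const.sub ((continuous_const (y := c)).mul (hz i)))).mul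
        (continuous_const.sub ((continuous_const (y := d)).mul (hz i)))).mul
        (continuous_const.sub ((continuous_const (y := c)).mul (hzinv i)))).mul
        (continuous_const.sub ((continuous_const (y := d)).mul (hzinv i)))
    · intro θ
      refine mul_ne_zero (mul_ne_zero (mul_ne_zero (mul_ne_zero (mul_ne_zero ?_ ?_) ?_) ?_) ?_) ?_
      · exact ne1 (norm_lt_of_le ha (hzu i θ).le)
      · exact ne1 (norm_lt_of_le hb (hzu i θ).le)
      · exact ne1 (norm_lt_of_le hc (hzu i θ).le)
      · exact ne1 (norm_lt_of_le hd (hzu i θ).le)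
      · exact ne1 (norm_lt_of_le hc (hzinvu i θ).le)
      · exact ne1 (norm_lt_of_le hd (hzinvu i θ).le)
  · apply continuous_finset_prod
    intro i _
    apply continuous_finset_prod
    intro j _
    by_cases hij : i < j
    · simp only [if_pos hij]
      apply Continuous.div
      · exact (continuous_const.sub ((hz i).mul (hz j))).mul
          (continuous_const.sub ((hz i).mul (hzinv j)))
      · exact (continuous_const.sub (((continuous_const (y := t)).mul (hz i)).mul (hz j))).mul
          (continuous_const.sub (((continuous_const (y := t)).mul (hz i)).mul (hzinv j)))
      · intro θ
        refine mul_ne_zero (ne1 ?_) (ne1 ?_)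
        · rw [norm_mul, norm_mul, hzu i θ, hzu j θ]; simpa using ht
        · rw [norm_mul, norm_mul, hzu i θ, hzinvu j θ]; simpa using ht
    · simp only [if_neg hij]
      exact continuous_const

lemma contDensity_d {m : ℕ} {t a b c : ℂ} (ht : ‖t‖ < 1) (ha : ‖a‖ < 1) (hb : ‖b‖ < 1)
    (hc : ‖c‖ < 1) :
    ContinuousOn (fun q : ℂ × (Fin m → ℝ) =>
      nsDensity m t a b c q.1 (fun i => Complex.exp (Complex.I * q.2 i)))
      (ball (0:ℂ) 1 ×ˢ (Set.univ : Set (Fin m → ℝ))) := by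
  intro q hq
  apply ContinuousAt.continuousWithinAt
  have hD : ‖q.1‖ < 1 := by
    have := hq.1; rwa [mem_ball_zero_iff] at this
  have hz : ∀ i : Fin m, Continuous
      (fun q : ℂ × (Fin m → ℝ) => Complex.exp (Complex.I * q.2 i)) := by
    intro i; fun_prop
  have hzu : ∀ (i : Fin m) (p : ℂ × (Fin m → ℝ)),
      ‖Complex.exp (Complex.I * p.2 i)‖ = 1 := fun i p => exp_unit _
  have hzinv : ∀ i : Fin m, Continuous
      (fun q : ℂ × (Fin m → ℝ) => (Complex.exp (Complex.I * q.2 i))⁻¹) :=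
    fun i => (hz i).inv₀ fun q => Complex.exp_ne_zero _
  have hzinvu : ∀ (i : Fin m) (p : ℂ × (Fin m → ℝ)),
      ‖(Complex.exp (Complex.I * p.2 i))⁻¹‖ = 1 := fun i p => by
    rw [norm_inv, hzu i p]; norm_num
  have hd' : Continuous (fun q : ℂ × (Fin m → ℝ) => q.1) := continuous_fst
  unfold nsDensity
  apply ContinuousAt.mul
  · apply tendsto_finset_prod
    intro i _
    apply ContinuousAt.div
    · exact ((continuous_const.sub ((hz i).pow 2))).continuousAt
    · exact ((((((continuous_const.sub ((continuous_const (y := a)).mul (hz i))).mul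
        (continuous_const.sub ((continuous_const (y := b)).mul (hz i)))).mul
        (continuous_const.sub ((continuous_const (y := c)).mul (hz i)))).mul
        (continuous_const.sub (hd'.mul (hz i)))).mul
        (continuous_const.sub ((continuous_const (y := c)).mul (hzinv i)))).mul
        (continuous_const.sub (hd'.mul (hzinv i)))).continuousAt
    · refine mul_ne_zero (mul_ne_zero (mul_ne_zero (mul_ne_zero (mul_ne_zero ?_ ?_) ?_) ?_) ?_) ?_
      · exact ne1 (norm_lt_of_le ha (hzu i q).le)
      · exact ne1 (norm_lt_of_le hb (hzu i q).le)
      · exact ne1 (norm_lt_of_le hc (hzu i q).le)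
      · exact ne1 (norm_lt_of_le hD (hzu i q).le)
      · exact ne1 (norm_lt_of_le hc (hzinvu i q).le)
      · exact ne1 (norm_lt_of_le hD (hzinvu i q).le)
  · apply tendsto_finset_prod
    intro i _
    apply tendsto_finset_prod
    intro j _
    by_cases hij : i < j
    · simp only [if_pos hij]
      apply ContinuousAt.div
      · exact ((continuous_const.sub ((hz i).mul (hz j))).mul
          (continuous_const.sub ((hz i).mul (hzinv j)))).continuousAt
      · exact ((continuous_const.sub (((continuous_const (y := t)).mul (hz i)).mul (hz j))).mul
          (continuous_const.sub
            (((continuous_const (y := t)).mul (hz i)).mul (hzinv j)))).continuousAt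
      · refine mul_ne_zero (ne1 ?_) (ne1 ?_)
        · rw [norm_mul, norm_mul, hzu i q, hzu j q]; simpa using ht
        · rw [norm_mul, norm_mul, hzu i q, hzinvu j q]; simpa using ht
    · simp only [if_neg hij]
      exact continuousAt_const

lemma contDensity_t {m : ℕ} {a b c d : ℂ} (ha : ‖a‖ < 1) (hb : ‖b‖ < 1)
    (hc : ‖c‖ < 1) (hd : ‖d‖ < 1) :
    ContinuousOn (fun q : ℂ × (Fin m → ℝ) =>
      nsDensity m q.1 a b c d (fun i => Complex.exp (Complex.I * q.2 i)))
      (ball (0:ℂ) 1 ×ˢ (Set.univ : Set (Fin m → ℝ))) := by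
  intro q hq
  apply ContinuousAt.continuousWithinAt
  have hT : ‖q.1‖ < 1 := by
    have := hq.1; rwa [mem_ball_zero_iff] at this
  have hz : ∀ i : Fin m, Continuous
      (fun q : ℂ × (Fin m → ℝ) => Complex.exp (Complex.I * q.2 i)) := by
    intro i; fun_prop
  have hzu : ∀ (i : Fin m) (p : ℂ × (Fin m → ℝ)),
      ‖Complex.exp (Complex.I * p.2 i)‖ = 1 := fun i p => exp_unit _
  have hzinv : ∀ i : Fin m, Continuous
      (fun q : ℂ × (Fin m → ℝ) => (Complex.exp (Complex.I * q.2 i))⁻¹) :=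
    fun i => (hz i).inv₀ fun q => Complex.exp_ne_zero _
  have hzinvu : ∀ (i : Fin m) (p : ℂ × (Fin m → ℝ)),
      ‖(Complex.exp (Complex.I * p.2 i))⁻¹‖ = 1 := fun i p => by
    rw [norm_inv, hzu i p]; norm_num
  have ht' : Continuous (fun q : ℂ × (Fin m → ℝ) => q.1) := continuous_fst
  unfold nsDensity
  apply ContinuousAt.mul
  · apply tendsto_finset_prod
    intro i _
    apply ContinuousAt.div
    · exact ((continuous_const.sub ((hz i).pow 2))).continuousAt
    · exact ((((((continuous_const.sub ((continuous_const (y := a)).mul (hz i))).mul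
        (continuous_const.sub ((continuous_const (y := b)).mul (hz i)))).mul
        (continuous_const.sub ((continuous_const (y := c)).mul (hz i)))).mul
        (continuous_const.sub ((continuous_const (y := d)).mul (hz i)))).mul
        (continuous_const.sub ((continuous_const (y := c)).mul (hzinv i)))).mul
        (continuous_const.sub ((continuous_const (y := d)).mul (hzinv i)))).continuousAt
    · refine mul_ne_zero (mul_ne_zero (mul_ne_zero (mul_ne_zero (mul_ne_zero ?_ ?_) ?_) ?_) ?_) ?_
      · exact ne1 (norm_lt_of_le ha (hzu i q).le)
      · exact ne1 (norm_lt_of_le hb (hzu i q).le)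
      · exact ne1 (norm_lt_of_le hc (hzu i q).le)
      · exact ne1 (norm_lt_of_le hd (hzu i q).le)
      · exact ne1 (norm_lt_of_le hc (hzinvu i q).le)
      · exact ne1 (norm_lt_of_le hd (hzinvu i q).le)
  · apply tendsto_finset_prod
    intro i _
    apply tendsto_finset_prod
    intro j _
    by_cases hij : i < j
    · simp only [if_pos hij]
      apply ContinuousAt.div
      · exact ((continuous_const.sub ((hz i).mul (hz j))).mul
          (continuous_const.sub ((hz i).mul (hzinv j)))).continuousAt
      · exact ((continuous_const.sub ((ht'.mul (hz i)).mul (hz j))).mul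
          (continuous_const.sub ((ht'.mul (hz i)).mul (hzinv j)))).continuousAt
      · refine mul_ne_zero (ne1 ?_) (ne1 ?_)
        · rw [norm_mul, norm_mul, hzu i q, hzu j q]; simpa using hT
        · rw [norm_mul, norm_mul, hzu i q, hzinvu j q]; simpa using hT
    · simp only [if_neg hij]
      exact continuousAt_const



theorem main_generic (n : ℕ) : ∀ t a b c d : ℂ, ‖a‖ < 1 → ‖b‖ < 1 → ‖c‖ < 1 → ‖d‖ < 1 →
    ‖t‖ < 1 → (∀ p q : ℕ, t ^ p * c ≠ t ^ q * d) →
    torusInt n (nsDensity n t a b c d) = rhs n t a b c d := by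
  induction n with
  | zero =>
    intro t a b c d ha hb hc hd ht hgen
    rw [rhs_zero]
    exact torusInt_zero _ fun z => by simp [nsDensity]
  | succ m ih =>
    intro t a b c d ha hb hc hd ht hgen
    have hcd : c ≠ d := by
      have := hgen 0 0
      simpa using this
    have htc : ‖t * c‖ < 1 := norm_lt_of_le ht hc.le
    have htd : ‖t * d‖ < 1 := norm_lt_of_le ht hd.le
    set c1 : ℂ := c / ((1 - a * c) * (1 - b * c) * (1 - c * d) * (c - d)) with hc1def
    set c2 : ℂ := d / ((1 - a * d) * (1 - b * d) * (1 - c * d) * (d - c)) with hc2def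
    have hinner : ∀ y : Fin m → ℝ,
        (∫ x : ℝ in Set.Ioc 0 (2 * Real.pi),
            nsDensity (m + 1) t a b c d
              (Fin.cons (Complex.exp (Complex.I * x)) fun j => Complex.exp (Complex.I * y j)))
          = (2 * Real.pi : ℂ) *
              (c1 * nsDensity m t a b (t * c) d (fun j => Complex.exp (Complex.I * y j))
               + c2 * nsDensity m t a b c (t * d) (fun j => Complex.exp (Complex.I * y j))) := by
      intro y
      set w : Fin m → ℂ := fun j => Complex.exp (Complex.I * y j) with hwdef
      have hw : ∀ j, ‖w j‖ = 1 := fun j => exp_unit _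
      have hrw : ∀ x : ℝ,
          nsDensity (m + 1) t a b c d (Fin.cons (Complex.exp (Complex.I * x)) w)
            = (ownF a b c d (Complex.exp (Complex.I * x)) *
                ∏ j : Fin m, sigF t (Complex.exp (Complex.I * x)) (w j)) *
              nsDensity m t a b c d w := by
        intro x
        rw [nsDensity_succ]
        simp only [Fin.cons_zero, Fin.cons_succ]
      rw [setIntegral_congr_fun measurableSet_Ioc (fun x _ => hrw x),
        MeasureTheory.integral_mul_const, inner_int ha hb hc hd ht hcd hw]
      have h1 := prod_sig_mul_c w hw ha hb hc hd htc
      have h2 := prod_sig_mul_d w hw ha hb hc hd htd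
      calc (2 * Real.pi : ℂ) *
            (c1 * ∏ j : Fin m, sigF t c (w j) + c2 * ∏ j : Fin m, sigF t d (w j)) *
            nsDensity m t a b c d w
          = (2 * Real.pi : ℂ) *
              (c1 * ((∏ j : Fin m, sigF t c (w j)) * nsDensity m t a b c d w)
               + c2 * ((∏ j : Fin m, sigF t d (w j)) * nsDensity m t a b c d w)) := by ring
        _ = _ := by rw [h1, h2]
    rw [torusInt_succ _ (contDensity_theta ht ha hb hc hd),
      setIntegral_congr_fun (box_measurable m) (fun y _ => hinner y)]
    have hIf : IntegrableOn
        (fun y : Fin m → ℝ => nsDensity m t a b (t * c) d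
          (fun j => Complex.exp (Complex.I * y j))) (box m) :=
      integrableOn_box (contDensity_theta ht ha hb htc hd)
    have hIg : IntegrableOn
        (fun y : Fin m → ℝ => nsDensity m t a b c (t * d)
          (fun j => Complex.exp (Complex.I * y j))) (box m) :=
      integrableOn_box (contDensity_theta ht ha hb hc htd)
    rw [MeasureTheory.integral_const_mul, integral_add (hIf.const_mul c1) (hIg.const_mul c2),
      MeasureTheory.integral_const_mul, MeasureTheory.integral_const_mul]
    have ihc : torusInt m (nsDensity m t a b (t * c) d) = rhs m t a b (t * c) d := by
      apply ih t a b (t * c) d ha hb htc hd ht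
      intro p q h
      apply hgen (p + 1) q
      rw [show t ^ (p + 1) * c = t ^ p * (t * c) by ring]
      exact h
    have ihd : torusInt m (nsDensity m t a b c (t * d)) = rhs m t a b c (t * d) := by
      apply ih t a b c (t * d) ha hb hc htd ht
      intro p q h
      apply hgen p (q + 1)
      rw [show t ^ (q + 1) * d = t ^ q * (t * d) by ring]
      exact h
    rw [rhs_rec m ha hb hc hd ht hcd, ← ihc, ← ihd, ← hc1def, ← hc2def]
    unfold torusInt box
    have h2π : (2 * Real.pi : ℂ) ≠ 0 := by
      simp [Real.pi_ne_zero]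
    rw [pow_succ]
    field_simp

lemma rhs_cont_d {n : ℕ} {t a b c : ℂ} (ht : ‖t‖ < 1) (ha : ‖a‖ < 1) (hb : ‖b‖ < 1)
    (hc : ‖c‖ < 1) :
    ContinuousOn (fun d' : ℂ => rhs n t a b c d') (ball (0:ℂ) 1) := by
  unfold rhs
  apply ContinuousOn.mul
  · apply ContinuousOn.inv₀
    · apply Continuous.continuousOn
      apply continuous_finset_prod
      intro i _
      fun_prop
    · intro x hx
      have hX : ‖x‖ < 1 := by rwa [mem_ball_zero_iff] at hx
      rw [Finset.prod_ne_zero_iff]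
      intro i _
      exact mul_ne_zero (mul_ne_zero (mul_ne_zero (mul_ne_zero
        (ne1 (norm3 ht ha hc i)) (ne1 (norm3 ht hb hc i))) (ne1 (norm3 ht hc hX i)))
        (ne1 (norm3 ht ha hX i))) (ne1 (norm3 ht hb hX i))
  · apply Continuous.continuousOn
    apply continuous_finset_prod
    intro i _
    fun_prop

lemma rhs_cont_t {n : ℕ} {a b c d : ℂ} (ha : ‖a‖ < 1) (hb : ‖b‖ < 1)
    (hc : ‖c‖ < 1) (hd : ‖d‖ < 1) :
    ContinuousOn (fun t' : ℂ => rhs n t' a b c d) (ball (0:ℂ) 1) := by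
  unfold rhs
  apply ContinuousOn.mul
  · apply ContinuousOn.inv₀
    · apply Continuous.continuousOn
      apply continuous_finset_prod
      intro i _
      fun_prop
    · intro x hx
      have hX : ‖x‖ < 1 := by rwa [mem_ball_zero_iff] at hx
      rw [Finset.prod_ne_zero_iff]
      intro i _
      exact mul_ne_zero (mul_ne_zero (mul_ne_zero (mul_ne_zero
        (ne1 (norm3 hX ha hc i)) (ne1 (norm3 hX hb hc i))) (ne1 (norm3 hX hc hd i)))
        (ne1 (norm3 hX ha hd i))) (ne1 (norm3 hX hb hd i))
  · apply Continuous.continuousOn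
    apply continuous_finset_prod
    intro i _
    fun_prop

lemma torusInt_cont_d {n : ℕ} {t a b c : ℂ} (ht : ‖t‖ < 1) (ha : ‖a‖ < 1) (hb : ‖b‖ < 1)
    (hc : ‖c‖ < 1) :
    ContinuousOn (fun d' : ℂ => torusInt n (nsDensity n t a b c d')) (ball (0:ℂ) 1) := by
  unfold torusInt
  exact continuousOn_const.mul (cont_param (contDensity_d ht ha hb hc))

lemma torusInt_cont_t {n : ℕ} {a b c d : ℂ} (ha : ‖a‖ < 1) (hb : ‖b‖ < 1)
    (hc : ‖c‖ < 1) (hd : ‖d‖ < 1) :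
    ContinuousOn (fun t' : ℂ => torusInt n (nsDensity n t' a b c d)) (ball (0:ℂ) 1) := by
  unfold torusInt
  exact continuousOn_const.mul (cont_param (contDensity_t ha hb hc hd))

theorem main_t_ne (n : ℕ) (t a b c d : ℂ) (ha : ‖a‖ < 1) (hb : ‖b‖ < 1) (hc : ‖c‖ < 1)
    (hd : ‖d‖ < 1) (ht : ‖t‖ < 1) (ht0 : t ≠ 0) :
    torusInt n (nsDensity n t a b c d) = rhs n t a b c d := by
  have hB : {d' : ℂ | ∃ p q : ℕ, t ^ p * c = t ^ q * d'}.Countable := by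
    apply Set.Countable.mono ?_ (Set.countable_range
      (fun pq : ℕ × ℕ => (t ^ pq.2)⁻¹ * (t ^ pq.1 * c)))
    rintro d' ⟨p, q, hpq⟩
    refine ⟨(p, q), ?_⟩
    have hq : (t : ℂ) ^ q ≠ 0 := pow_ne_zero q ht0
    field_simp
    linear_combination hpq
  refine eq_of_dense (torusInt_cont_d ht ha hb hc) (rhs_cont_d ht ha hb hc) hB ?_
    (by rwa [mem_ball_zero_iff])
  intro y hy hyB
  have hy1 : ‖y‖ < 1 := by rwa [mem_ball_zero_iff] at hy
  apply main_generic n t a b c y ha hb hc hy1 ht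
  intro p q h
  exact hyB ⟨p, q, h⟩

theorem main_full (n : ℕ) (t a b c d : ℂ) (ha : ‖a‖ < 1) (hb : ‖b‖ < 1) (hc : ‖c‖ < 1)
    (hd : ‖d‖ < 1) (ht : ‖t‖ < 1) :
    torusInt n (nsDensity n t a b c d) = rhs n t a b c d := by
  refine eq_of_dense (torusInt_cont_t ha hb hc hd) (rhs_cont_t ha hb hc hd)
    (Set.countable_singleton (0:ℂ)) ?_ (by rwa [mem_ball_zero_iff])
  intro y hy hy0
  have hy1 : ‖y‖ < 1 := by rwa [mem_ball_zero_iff] at hy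
  exact main_t_ne n y a b c d ha hb hc hd hy1 (by simpa using hy0)

end NSK

/-- The constant term of the `q = 0` nonsymmetric Koornwinder density equals
`∏_{i=0}^{n−1} [(1−tⁱac)(1−tⁱbc)(1−tⁱcd)(1−tⁱad)(1−tⁱbd)]⁻¹ · ∏_{j=n−1}^{2n−2}(1−tʲabcd)`. -/
theorem nonsymmetric_constant_term (n : ℕ) (t a b c d : ℂ)
    (ha : ‖a‖ < 1) (hb : ‖b‖ < 1) (hc : ‖c‖ < 1) (hd : ‖d‖ < 1) (ht : ‖t‖ < 1) :
    torusInt n (nsDensity n t a b c d)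
    = (∏ i ∈ Finset.range n,
        ((1 - t ^ i * a * c) * (1 - t ^ i * b * c) * (1 - t ^ i * c * d) *
         (1 - t ^ i * a * d) * (1 - t ^ i * b * d)))⁻¹ *
      ∏ j ∈ Finset.Ico (n - 1) (2 * n - 1), (1 - t ^ j * a * b * c * d) := by
  exact NSK.main_full n t a b c d ha hb hc hd ht
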